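/- Let P_1 ≠ P_2 ∈ 𝒫(𝒵) and let {r_n} be a sequence of positive reals with r_n → 0. For each n, the minimum over P ∈ 𝒫̄(𝒵) of D_KL(P‖P_1) + D_KL(P‖P_2) − √(r_n)·√(V_KL(P‖P_1) + V_KL(P‖P_2)) is attained, and every sequence {P̃_n} of minimizers converges to P* as n → ∞. -/

import Mathlib

open scoped BigOperators
open Filter MeasureTheory Matrix

namespace TwoSampleTest

variable {m : ℕ}

/-- All probability distributions on the alphabet `Fin (m+1)` (the set `𝒫̄(𝒵)`). -/
def IsDist (P : Fin (m+1) → ℝ) : Prop :=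
  (∀ i, 0 ≤ P i) ∧ ∑ i, P i = 1

/-- Strictly positive probability distributions on `Fin (m+1)` (the set `𝒫(𝒵)`). -/
def IsPosDist (P : Fin (m+1) → ℝ) : Prop :=
  (∀ i, 0 < P i) ∧ ∑ i, P i = 1

/-- The open coordinate domain `Ξ ⊆ ℝ^m`. -/
def Xi (m : ℕ) : Set (Fin m → ℝ) :=
  {x | (∀ i, 0 < x i) ∧ ∑ i, x i < 1}

/-- Coordinate vector (first `m` components) of a distribution on `Fin (m+1)`. -/
def coordOf (P : Fin (m+1) → ℝ) : Fin m → ℝ := fun i => P i.castSucc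

/-- Euclidean norm on `ℝ^m`. -/
noncomputable def l2norm (v : Fin m → ℝ) : ℝ := Real.sqrt (∑ i, (v i)^2)

/-- ℓ₁ distance between two distributions. -/
noncomputable def l1dist (P Q : Fin (m+1) → ℝ) : ℝ := ∑ i, |P i - Q i|

/-- A divergence on `𝒫(𝒵)`, viewed through coordinates in `Ξ`. -/
structure Divergence (m : ℕ) where
  f : (Fin m → ℝ) → (Fin m → ℝ) → ℝ
  smooth : ContDiffOn ℝ (⊤ : ℕ∞)
    (fun p : (Fin m → ℝ) × (Fin m → ℝ) => f p.1 p.2) ((Xi m) ×ˢ (Xi m))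
  nonneg : ∀ s ∈ Xi m, ∀ r ∈ Xi m, 0 ≤ f s r
  eq_zero_iff : ∀ s ∈ Xi m, ∀ r ∈ Xi m, (f s r = 0 ↔ s = r)
  taylor : ∀ r ∈ Xi m, ∃ G : Matrix (Fin m) (Fin m) ℝ, G.PosDef ∧
      ∃ C > (0:ℝ), ∃ δ > (0:ℝ), ∀ e : Fin m → ℝ, l2norm e < δ → r + e ∈ Xi m →
        |f (r + e) r - (1/2) * ∑ i, ∑ j, G i j * e i * e j| ≤ C * (l2norm e)^3
  boundary : ∀ r ∈ Xi m, ∀ S : ℕ → (Fin m → ℝ), (∀ n, S n ∈ Xi m) →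
      ∀ L ∈ frontier (Xi m), Filter.Tendsto S Filter.atTop (nhds L) →
        0 < Filter.liminf (fun n => f (S n) r) Filter.atTop

/-- The divergence evaluated at two distributions. -/
noncomputable def Dapp (D : Divergence m) (T R : Fin (m+1) → ℝ) : ℝ :=
  D.f (coordOf T) (coordOf R)

/-- The matrix `A_{D,P}` associated with a divergence `D` at coordinate point `p`:
`a_{ij} = ½ ∂²D(S‖p)/∂S_i∂S_j` at `S = p`. -/
noncomputable def Amat (D : Divergence m) (p : Fin m → ℝ) : Matrix (Fin m) (Fin m) ℝ :=
  Matrix.of fun i j =>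
    (1/2) * fderiv ℝ (fun s => fderiv ℝ (fun s' => D.f s' p) s (Pi.single j 1)) p (Pi.single i 1)

/-- The matrix `Σ_P`. -/
noncomputable def SigmaMat (P : Fin (m+1) → ℝ) : Matrix (Fin m) (Fin m) ℝ :=
  Matrix.of fun i j =>
    if i = j then 1 / P i.castSucc + 1 / P (Fin.last m) else 1 / P (Fin.last m)

/-- `D` is an invariant divergence with constant `η`. -/
def IsInvariant (D : Divergence m) (η : ℝ) : Prop :=
  ∀ P : Fin (m+1) → ℝ, IsPosDist P → Amat D (coordOf P) = η • SigmaMat P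

/-- Quadratic form `vᵀ M v`. -/
noncomputable def quadForm (M : Matrix (Fin m) (Fin m) ℝ) (v : Fin m → ℝ) : ℝ :=
  v ⬝ᵥ M.mulVec v

/-- Type (empirical distribution) of a sequence. -/
noncomputable def typeOf {n : ℕ} (x : Fin n → Fin (m+1)) : Fin (m+1) → ℝ :=
  fun i => ((Finset.univ.filter (fun t => x t = i)).card : ℝ) / n

/-- Probability of a sequence under i.i.d. sampling from `P`. -/
def probSeq (P : Fin (m+1) → ℝ) {n : ℕ} (x : Fin n → Fin (m+1)) : ℝ := ∏ t, P (x t)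

/-- Type-I error of the divergence test with test statistic `Dfun` and threshold `r`,
under common distribution `P`: the probability that `Dfun(T_{X^n}‖T_{Y^n}) ≥ r`. -/
noncomputable def alpha (Dfun : (Fin (m+1) → ℝ) → (Fin (m+1) → ℝ) → ℝ) (r : ℝ)
    (P : Fin (m+1) → ℝ) (n : ℕ) : ℝ :=
  ∑ x : Fin n → Fin (m+1), ∑ y : Fin n → Fin (m+1),
    if r ≤ Dfun (typeOf x) (typeOf y) then probSeq P x * probSeq P y else 0

/-- Type-II error: the probability under `P₁ × P₂` that `Dfun(T_{X^n}‖T_{Y^n}) < r`. -/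
noncomputable def beta (Dfun : (Fin (m+1) → ℝ) → (Fin (m+1) → ℝ) → ℝ) (r : ℝ)
    (P₁ P₂ : Fin (m+1) → ℝ) (n : ℕ) : ℝ :=
  ∑ x : Fin n → Fin (m+1), ∑ y : Fin n → Fin (m+1),
    if Dfun (typeOf x) (typeOf y) < r then probSeq P₁ x * probSeq P₂ y else 0

/-- Kullback-Leibler divergence (with the convention `0 · ln 0 = 0`). -/
noncomputable def KL (P Q : Fin (m+1) → ℝ) : ℝ := ∑ i, P i * Real.log (P i / Q i)

/-- KL divergence variance. -/
noncomputable def VKL (P Q : Fin (m+1) → ℝ) : ℝ :=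
  ∑ i, P i * (Real.log (P i / Q i) - KL P Q)^2

/-- Bhattacharyya distance. -/
noncomputable def DB (P Q : Fin (m+1) → ℝ) : ℝ :=
  - Real.log (∑ i, Real.sqrt (P i * Q i))

/-- The normalized geometric mean `P*` of two distributions. -/
noncomputable def Pstar (P₁ P₂ : Fin (m+1) → ℝ) : Fin (m+1) → ℝ :=
  fun i => Real.sqrt (P₁ i * P₂ i) / ∑ j, Real.sqrt (P₁ j * P₂ j)

/-- Jensen–Shannon divergence. -/
noncomputable def DJS (T R : Fin (m+1) → ℝ) : ℝ :=
  (1/2) * KL T (fun i => (T i + R i)/2) + (1/2) * KL R (fun i => (T i + R i)/2)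

/-- Law of `m` i.i.d. standard Gaussians. -/
noncomputable def stdGaussianPi (m : ℕ) : Measure (Fin m → ℝ) :=
  Measure.pi (fun _ => ProbabilityTheory.gaussianReal 0 1)

/-- Tail probability of the generalized chi-square distribution with weights `lam`:
`P(∑ lam i * U i ^ 2 ≥ c)` for i.i.d. standard normal `U`. -/
noncomputable def genChiSqTail (m : ℕ) (lam : Fin m → ℝ) (c : ℝ) : ℝ :=
  (stdGaussianPi m {u | c ≤ ∑ i, lam i * (u i)^2}).toReal

/-- Tail probability of the chi-square distribution with `m` degrees of freedom. -/
noncomputable def chiSqTail (m : ℕ) (c : ℝ) : ℝ := genChiSqTail m (fun _ => 1) c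

/-- Inverse of the chi-square tail probability. -/
noncomputable def chiSqTailInv (m : ℕ) (ε : ℝ) : ℝ :=
  sInf {c : ℝ | 0 < c ∧ chiSqTail m c ≤ ε}

/-- The linear functional `ℓ_P(T,R)`. -/
noncomputable def ellP (P P₁ P₂ T R : Fin (m+1) → ℝ) : ℝ :=
  ∑ i, (T i - P i) * Real.log (P i / P₁ i) + ∑ i, (R i - P i) * Real.log (P i / P₂ i)

/-- Membership of `(T,R)` in the set `A_{Σ_P}(r)`. -/
noncomputable def memASigma (P T R : Fin (m+1) → ℝ) (r : ℝ) : Prop :=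
  IsPosDist T ∧ IsPosDist R ∧
    quadForm (SigmaMat P) (fun i => coordOf T i - coordOf P i)
      + quadForm (SigmaMat P) (fun i => coordOf R i - coordOf P i) ≤ r

/-- The vector with components `ln(P_i/Q_i) − ln(P_k/Q_k)`, `i = 1,…,k−1`. -/
noncomputable def cvec (P Q : Fin (m+1) → ℝ) : Fin m → ℝ :=
  fun i => Real.log (P i.castSucc / Q i.castSucc) - Real.log (P (Fin.last m) / Q (Fin.last m))

/-- A type distribution with denominator `n`. -/
def IsTypeDist (n : ℕ) (P : Fin (m+1) → ℝ) : Prop :=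
  IsDist P ∧ ∀ i, ∃ a : ℕ, P i = (a : ℝ) / n

/-- The best (largest) type-II error exponent `−(1/n) ln β_n` over all thresholds `r > 0`
whose type-I error is at most `ε` for every common distribution `P ∈ 𝒫(𝒵)`. -/
noncomputable def supExp (Dfun : (Fin (m+1) → ℝ) → (Fin (m+1) → ℝ) → ℝ)
    (P₁ P₂ : Fin (m+1) → ℝ) (ε : ℝ) (n : ℕ) : ℝ :=
  sSup { v : ℝ | ∃ r : ℝ, 0 < r ∧
    (∀ P : Fin (m+1) → ℝ, IsPosDist P → alpha Dfun r P n ≤ ε) ∧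
    v = -(Real.log (beta Dfun r P₁ P₂ n)) / n }

noncomputable def mlogSq (x : ℝ) : ℝ := 4 * (Real.negMulLog (Real.sqrt x))^2

lemma continuous_mlogSq : Continuous mlogSq :=
  continuous_const.mul ((Real.continuous_negMulLog.comp Real.continuous_sqrt).pow 2)

lemma mlogSq_eq {x : ℝ} (hx : 0 ≤ x) : mlogSq x = x * (Real.log x)^2 := by
  have h := Real.sq_sqrt hx
  unfold mlogSq Real.negMulLog
  rw [Real.log_sqrt hx]
  nlinarith [h]

lemma KL_formula (P Q : Fin (m+1) → ℝ) (hQ : ∀ i, 0 < Q i) :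
    KL P Q = ∑ i, -(Q i * Real.negMulLog (P i / Q i)) := by
  refine Finset.sum_congr rfl fun i _ => ?_
  have h : Q i ≠ 0 := (hQ i).ne'
  rw [Real.negMulLog]
  field_simp

lemma continuous_KL (Q : Fin (m+1) → ℝ) (hQ : ∀ i, 0 < Q i) :
    Continuous fun P : Fin (m+1) → ℝ => KL P Q := by
  have : (fun P : Fin (m+1) → ℝ => KL P Q)
      = fun P => ∑ i, -(Q i * Real.negMulLog (P i / Q i)) :=
    funext fun P => KL_formula P Q hQ
  rw [this]
  exact continuous_finset_sum _ fun i _ =>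
    (continuous_const.mul (Real.continuous_negMulLog.comp (by fun_prop : Continuous fun P : Fin (m+1) → ℝ => P i / Q i))).neg

lemma VKL_formula (P Q : Fin (m+1) → ℝ) (hP : IsDist P) (hQ : ∀ i, 0 < Q i) :
    VKL P Q = (∑ i, Q i * mlogSq (P i / Q i)) - (KL P Q)^2 := by
  have h1 : ∀ i : Fin (m+1), P i * (Real.log (P i / Q i))^2 = Q i * mlogSq (P i / Q i) := by
    intro i
    rw [mlogSq_eq (div_nonneg (hP.1 i) (hQ i).le), ← mul_assoc,
      mul_div_cancel₀ _ (hQ i).ne']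
  have expand : VKL P Q
      = (∑ i, P i * (Real.log (P i / Q i))^2)
        - 2 * KL P Q * (∑ i, P i * Real.log (P i / Q i)) + (KL P Q)^2 * ∑ i, P i := by
    rw [VKL, Finset.mul_sum, Finset.mul_sum, ← Finset.sum_sub_distrib, ← Finset.sum_add_distrib]
    exact Finset.sum_congr rfl fun i _ => by ring
  rw [expand, show (∑ i, P i * Real.log (P i / Q i)) = KL P Q from rfl, hP.2,
    Finset.sum_congr rfl fun i _ => h1 i]
  ring

lemma KL_nonneg (P Q : Fin (m+1) → ℝ) (hP : IsDist P) (hQ : IsPosDist Q) :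
    0 ≤ KL P Q := by
  have key : ∀ i : Fin (m+1), P i - Q i ≤ P i * Real.log (P i / Q i) := by
    intro i
    rcases eq_or_lt_of_le (hP.1 i) with h0 | hpos
    · rw [← h0]; simp; linarith [(hQ.1 i).le]
    · have hlog : Real.log (Q i / P i) ≤ Q i / P i - 1 :=
        Real.log_le_sub_one_of_pos (div_pos (hQ.1 _) hpos)
      have he : Real.log (P i / Q i) = - Real.log (Q i / P i) := by
        rw [← Real.log_inv, inv_div]
      have h2 : P i * (Q i / P i - 1) = Q i - P i := by field_simp
      nlinarith [mul_le_mul_of_nonneg_left hlog hpos.le]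
  have h : ∑ i, (P i - Q i) ≤ ∑ i, P i * Real.log (P i / Q i) :=
    Finset.sum_le_sum fun i _ => key i
  rw [Finset.sum_sub_distrib, hP.2, hQ.2] at h
  simpa [KL] using h

lemma KL_pos (P Q : Fin (m+1) → ℝ) (hP : IsDist P) (hQ : IsPosDist Q) (hne : P ≠ Q) :
    0 < KL P Q := by
  have key : ∀ i : Fin (m+1), P i - Q i ≤ P i * Real.log (P i / Q i) := by
    intro i
    rcases eq_or_lt_of_le (hP.1 i) with h0 | hpos
    · rw [← h0]; simp; linarith [(hQ.1 i).le]
    · have hlog : Real.log (Q i / P i) ≤ Q i / P i - 1 :=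
        Real.log_le_sub_one_of_pos (div_pos (hQ.1 _) hpos)
      have he : Real.log (P i / Q i) = - Real.log (Q i / P i) := by
        rw [← Real.log_inv, inv_div]
      have h2 : P i * (Q i / P i - 1) = Q i - P i := by field_simp
      nlinarith [mul_le_mul_of_nonneg_left hlog hpos.le]
  obtain ⟨j, hj⟩ := Function.ne_iff.1 hne
  have keyj : P j - Q j < P j * Real.log (P j / Q j) := by
    rcases eq_or_lt_of_le (hP.1 j) with h0 | hpos
    · rw [← h0]; simp; linarith [hQ.1 j]
    · have hx1 : Q j / P j ≠ 1 := by
        intro h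
        rw [div_eq_one_iff_eq hpos.ne'] at h
        exact hj h.symm
      have hlog : Real.log (Q j / P j) < Q j / P j - 1 :=
        Real.log_lt_sub_one_of_pos (div_pos (hQ.1 _) hpos) hx1
      have he : Real.log (P j / Q j) = - Real.log (Q j / P j) := by
        rw [← Real.log_inv, inv_div]
      have h2 : P j * (Q j / P j - 1) = Q j - P j := by field_simp
      nlinarith [mul_lt_mul_of_pos_left hlog hpos]
  have hlt : ∑ i, (P i - Q i) < KL P Q := by
    refine Finset.sum_lt_sum (fun i _ => key i) ⟨j, Finset.mem_univ j, keyj⟩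
  rw [Finset.sum_sub_distrib, hP.2, hQ.2] at hlt
  linarith

lemma Z_pos (P₁ P₂ : Fin (m+1) → ℝ) (h₁ : IsPosDist P₁) (h₂ : IsPosDist P₂) :
    0 < ∑ j, Real.sqrt (P₁ j * P₂ j) :=
  Finset.sum_pos (fun j _ => Real.sqrt_pos.2 (mul_pos (h₁.1 j) (h₂.1 j))) Finset.univ_nonempty

lemma Pstar_posDist (P₁ P₂ : Fin (m+1) → ℝ) (h₁ : IsPosDist P₁) (h₂ : IsPosDist P₂) :
    IsPosDist (Pstar P₁ P₂) := by
  have hZ := Z_pos P₁ P₂ h₁ h₂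
  constructor
  · intro i
    exact div_pos (Real.sqrt_pos.2 (mul_pos (h₁.1 i) (h₂.1 i))) hZ
  · show (∑ i, Real.sqrt (P₁ i * P₂ i) / ∑ j, Real.sqrt (P₁ j * P₂ j)) = 1
    rw [← Finset.sum_div, div_self hZ.ne']

lemma KL_self (Q : Fin (m+1) → ℝ) (hQ : ∀ i, 0 < Q i) : KL Q Q = 0 :=
  Finset.sum_eq_zero fun i _ => by rw [div_self (hQ i).ne', Real.log_one, mul_zero]


lemma D_identity (P₁ P₂ : Fin (m+1) → ℝ) (h₁ : IsPosDist P₁) (h₂ : IsPosDist P₂)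
    (P : Fin (m+1) → ℝ) (hP : IsDist P) :
    KL P P₁ + KL P P₂
      = 2 * KL P (Pstar P₁ P₂) - 2 * Real.log (∑ j, Real.sqrt (P₁ j * P₂ j)) := by
  have hZ := Z_pos P₁ P₂ h₁ h₂
  set Z := ∑ j, Real.sqrt (P₁ j * P₂ j) with hZdef
  have key : ∀ i : Fin (m+1),
      P i * Real.log (P i / P₁ i) + P i * Real.log (P i / P₂ i)
        = 2 * (P i * Real.log (P i / Pstar P₁ P₂ i)) - 2 * Real.log Z * P i := by
    intro i
    rcases eq_or_lt_of_le (hP.1 i) with h0 | hpos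
    · rw [← h0]; ring
    · have hp1 := h₁.1 i
      have hp2 := h₂.1 i
      have hsq : (0:ℝ) < Real.sqrt (P₁ i * P₂ i) := Real.sqrt_pos.2 (mul_pos hp1 hp2)
      have hPs : Pstar P₁ P₂ i = Real.sqrt (P₁ i * P₂ i) / Z := rfl
      rw [hPs, Real.log_div hpos.ne' hp1.ne', Real.log_div hpos.ne' hp2.ne',
        Real.log_div hpos.ne' (div_pos hsq hZ).ne',
        Real.log_div hsq.ne' hZ.ne', Real.log_sqrt (mul_pos hp1 hp2).le,
        Real.log_mul hp1.ne' hp2.ne']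
      ring
  calc KL P P₁ + KL P P₂
      = ∑ i, (P i * Real.log (P i / P₁ i) + P i * Real.log (P i / P₂ i)) := by
        rw [KL, KL, Finset.sum_add_distrib]
    _ = ∑ i, (2 * (P i * Real.log (P i / Pstar P₁ P₂ i)) - 2 * Real.log Z * P i) :=
        Finset.sum_congr rfl fun i _ => key i
    _ = 2 * KL P (Pstar P₁ P₂) - 2 * Real.log Z := by
        rw [Finset.sum_sub_distrib, ← Finset.mul_sum, ← Finset.mul_sum, hP.2, mul_one, KL]

lemma D_min (P₁ P₂ : Fin (m+1) → ℝ) (h₁ : IsPosDist P₁) (h₂ : IsPosDist P₂)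
    (P : Fin (m+1) → ℝ) (hP : IsDist P) :
    KL (Pstar P₁ P₂) P₁ + KL (Pstar P₁ P₂) P₂ ≤ KL P P₁ + KL P P₂ := by
  have hPs := Pstar_posDist P₁ P₂ h₁ h₂
  rw [D_identity P₁ P₂ h₁ h₂ P hP, D_identity P₁ P₂ h₁ h₂ _ ⟨fun i => (hPs.1 i).le, hPs.2⟩,
    KL_self _ hPs.1]
  have := KL_nonneg P (Pstar P₁ P₂) hP hPs
  linarith

lemma D_min_strict (P₁ P₂ : Fin (m+1) → ℝ) (h₁ : IsPosDist P₁) (h₂ : IsPosDist P₂)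
    (P : Fin (m+1) → ℝ) (hP : IsDist P) (hne : P ≠ Pstar P₁ P₂) :
    KL (Pstar P₁ P₂) P₁ + KL (Pstar P₁ P₂) P₂ < KL P P₁ + KL P P₂ := by
  have hPs := Pstar_posDist P₁ P₂ h₁ h₂
  rw [D_identity P₁ P₂ h₁ h₂ P hP, D_identity P₁ P₂ h₁ h₂ _ ⟨fun i => (hPs.1 i).le, hPs.2⟩,
    KL_self _ hPs.1]
  have := KL_pos P (Pstar P₁ P₂) hP hPs hne
  linarith

lemma isCompact_dist : IsCompact {P : Fin (m+1) → ℝ | IsDist P} := by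
  apply Metric.isCompact_of_isClosed_isBounded
  · have h1 : IsClosed {P : Fin (m+1) → ℝ | ∀ i, 0 ≤ P i} := by
      rw [Set.setOf_forall]
      exact isClosed_iInter fun i => isClosed_le continuous_const (continuous_apply i)
    have h2 : IsClosed {P : Fin (m+1) → ℝ | ∑ i, P i = 1} :=
      isClosed_eq (continuous_finset_sum _ fun i _ => continuous_apply i) continuous_const
    exact (h1.inter h2)
  · apply Bornology.IsBounded.subset (Metric.isBounded_closedBall (x := (0 : Fin (m+1) → ℝ)) (r := 1))
    intro P hP
    rw [Metric.mem_closedBall, dist_zero_right]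
    rw [pi_norm_le_iff_of_nonneg zero_le_one]
    intro i
    rw [Real.norm_eq_abs, abs_of_nonneg (hP.1 i)]
    calc P i ≤ ∑ j, P j := Finset.single_le_sum (fun j _ => hP.1 j) (Finset.mem_univ i)
      _ = 1 := hP.2

lemma continuousOn_VKL (Q : Fin (m+1) → ℝ) (hQ : ∀ i, 0 < Q i) :
    ContinuousOn (fun P : Fin (m+1) → ℝ => VKL P Q) {P | IsDist P} := by
  have hc : Continuous fun P : Fin (m+1) → ℝ =>
      (∑ i, Q i * mlogSq (P i / Q i)) - (KL P Q)^2 := by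
    apply Continuous.sub
    · exact continuous_finset_sum _ fun i _ =>
        continuous_const.mul (continuous_mlogSq.comp (by fun_prop : Continuous fun P : Fin (m+1) → ℝ => P i / Q i))
    · exact (continuous_KL Q hQ).pow 2
  exact hc.continuousOn.congr fun P hP => VKL_formula P Q hP hQ

/-- For `r_n → 0`, the minimum over `P ∈ 𝒫̄(𝒵)` of
`D_KL(P‖P₁) + D_KL(P‖P₂) − √r_n·√(V_KL(P‖P₁)+V_KL(P‖P₂))` is attained, and every
sequence of minimizers converges to `P*`. -/
theorem penalized_minimizers_converge {m : ℕ} (hm : 1 ≤ m)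
    (P₁ P₂ : Fin (m+1) → ℝ) (h₁ : IsPosDist P₁) (h₂ : IsPosDist P₂) (hne : P₁ ≠ P₂)
    (r : ℕ → ℝ) (hrpos : ∀ n, 0 < r n) (hr0 : Filter.Tendsto r Filter.atTop (nhds 0)) :
    (∀ n : ℕ, ∃ P : Fin (m+1) → ℝ, IsDist P ∧ ∀ Q : Fin (m+1) → ℝ, IsDist Q →
      KL P P₁ + KL P P₂ - Real.sqrt (r n) * Real.sqrt (VKL P P₁ + VKL P P₂)
        ≤ KL Q P₁ + KL Q P₂ - Real.sqrt (r n) * Real.sqrt (VKL Q P₁ + VKL Q P₂)) ∧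
    ∀ Pt : ℕ → Fin (m+1) → ℝ,
      (∀ n, IsDist (Pt n) ∧ ∀ Q : Fin (m+1) → ℝ, IsDist Q →
        KL (Pt n) P₁ + KL (Pt n) P₂
            - Real.sqrt (r n) * Real.sqrt (VKL (Pt n) P₁ + VKL (Pt n) P₂)
          ≤ KL Q P₁ + KL Q P₂ - Real.sqrt (r n) * Real.sqrt (VKL Q P₁ + VKL Q P₂)) →
      Filter.Tendsto Pt Filter.atTop (nhds (Pstar P₁ P₂)) := by
  classical
  have hScomp : IsCompact {P : Fin (m+1) → ℝ | IsDist P} := isCompact_dist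
  have hSne : Set.Nonempty {P : Fin (m+1) → ℝ | IsDist P} :=
    ⟨P₁, ⟨fun i => (h₁.1 i).le, h₁.2⟩⟩
  have hDcont : Continuous fun P : Fin (m+1) → ℝ => KL P P₁ + KL P P₂ :=
    (continuous_KL P₁ h₁.1).add (continuous_KL P₂ h₂.1)
  have hVcont : ContinuousOn (fun P : Fin (m+1) → ℝ =>
      Real.sqrt (VKL P P₁ + VKL P P₂)) {P | IsDist P} :=
    Real.continuous_sqrt.comp_continuousOn
      ((continuousOn_VKL P₁ h₁.1).add (continuousOn_VKL P₂ h₂.1))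
  have hPsPos := Pstar_posDist P₁ P₂ h₁ h₂
  have hPsDist : IsDist (Pstar P₁ P₂) := ⟨fun i => (hPsPos.1 i).le, hPsPos.2⟩
  constructor
  · intro n
    have hFcont : ContinuousOn (fun P : Fin (m+1) → ℝ =>
        KL P P₁ + KL P P₂ - Real.sqrt (r n) * Real.sqrt (VKL P P₁ + VKL P P₂))
        {P | IsDist P} :=
      hDcont.continuousOn.sub (continuousOn_const.mul hVcont)
    obtain ⟨P, hPS, hmin⟩ := hScomp.exists_isMinOn hSne hFcont
    exact ⟨P, hPS, fun Q hQ => hmin hQ⟩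
  · intro Pt hPt
    have hPtS : ∀ n, Pt n ∈ {P : Fin (m+1) → ℝ | IsDist P} := fun n => (hPt n).1
    obtain ⟨PM, hPMS, hPMmax⟩ := hScomp.exists_isMaxOn hSne hVcont
    set M : ℝ := Real.sqrt (VKL PM P₁ + VKL PM P₂) with hMdef
    have hbound : ∀ P, IsDist P → Real.sqrt (VKL P P₁ + VKL P P₂) ≤ M :=
      fun P hP => hPMmax hP
    set D : (Fin (m+1) → ℝ) → ℝ := fun P => KL P P₁ + KL P P₂ with hDdef
    have hDlow : ∀ n, D (Pstar P₁ P₂) ≤ D (Pt n) :=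
      fun n => D_min P₁ P₂ h₁ h₂ (Pt n) (hPt n).1
    have hDup : ∀ n, D (Pt n) ≤ D (Pstar P₁ P₂) + Real.sqrt (r n) * M := by
      intro n
      have h := (hPt n).2 (Pstar P₁ P₂) hPsDist
      have h2 : Real.sqrt (r n) * Real.sqrt (VKL (Pt n) P₁ + VKL (Pt n) P₂)
          ≤ Real.sqrt (r n) * M :=
        mul_le_mul_of_nonneg_left (hbound _ (hPt n).1) (Real.sqrt_nonneg _)
      have h3 : 0 ≤ Real.sqrt (r n) * Real.sqrt (VKL (Pstar P₁ P₂) P₁ + VKL (Pstar P₁ P₂) P₂) := by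
        positivity
      simp only [hDdef]
      linarith
    have hsq : Tendsto (fun n => D (Pstar P₁ P₂) + Real.sqrt (r n) * M) atTop
        (nhds (D (Pstar P₁ P₂))) := by
      have h1 : Tendsto (fun n => Real.sqrt (r n)) atTop (nhds 0) := by
        have := (Real.continuous_sqrt.tendsto 0).comp hr0
        simpa [Function.comp_def] using this
      have h2 : Tendsto (fun n => Real.sqrt (r n) * M) atTop (nhds 0) := by
        simpa using h1.mul_const M
      simpa using tendsto_const_nhds.add h2
    have hDtend : Tendsto (fun n => D (Pt n)) atTop (nhds (D (Pstar P₁ P₂))) :=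
      tendsto_of_tendsto_of_tendsto_of_le_of_le tendsto_const_nhds hsq hDlow hDup
    apply Filter.tendsto_of_subseq_tendsto
    intro ns hns
    obtain ⟨x, hxS, φ, hφ, hconv⟩ := hScomp.tendsto_subseq (fun k => hPtS (ns k))
    refine ⟨φ, ?_⟩
    have hx : D x = D (Pstar P₁ P₂) := by
      have l1 : Tendsto (fun k => D (Pt (ns (φ k)))) atTop (nhds (D x)) :=
        (hDcont.tendsto x).comp hconv
      have l2 : Tendsto (fun k => D (Pt (ns (φ k)))) atTop (nhds (D (Pstar P₁ P₂))) :=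
        hDtend.comp (hns.comp hφ.tendsto_atTop)
      exact tendsto_nhds_unique l1 l2
    have hxPst : x = Pstar P₁ P₂ := by
      by_contra hne'
      have := D_min_strict P₁ P₂ h₁ h₂ x hxS hne'
      simp only [hDdef] at hx
      linarith
    rw [hxPst] at hconv
    exact hconv

end TwoSampleTest
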